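/- arXiv:2406.19424 — 2 statements merged into one kernel-verified Lean document; each statement's English description precedes it below -/
import Mathlib

section
/- Suppose P_t = (1 + k_t) P_{t−1} − d_t, d_t = (1 + g_t) d_{t−1}, with 1 + k_t > 0, 1 + g_t > 0, d_0 > 0 for all t, and suppose the discounted price transversality condition holds: ∏_{j=1}^{N} (1+g_{t+j})/(1+k_{t+j}) · P_{t+N}/d_{t+N} → 0 as N → ∞ (equivalently, P_{t+N} ∏_{j=1}^{r+N}(1+k_{t+j})^{-1} → 0 appropriately normalized). Then for all r ≥ 0, P_{t+r} = ∑_{q=1}^∞ (∏_{j=r+1}^{r+q} (1+g_{t+j})/(1+k_{t+j})) · (∏_{j=1}^r (1+g_{t+j})) · d_t, whenever the series converges. -/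
open Finset Filter

theorem gordon_price_infinite_horizon
    (P k g d : ℕ → ℝ) (t : ℕ)
    (hk : ∀ s : ℕ, 0 < 1 + k s) (hg : ∀ s : ℕ, 0 < 1 + g s) (hd0 : 0 < d 0)
    (hrecP : ∀ s : ℕ, 1 ≤ s → P s = (1 + k s) * P (s - 1) - d s)
    (hrecd : ∀ s : ℕ, 1 ≤ s → d s = (1 + g s) * d (s - 1)) :
    ∀ r : ℕ,
      Tendsto (fun N : ℕ =>
          (∏ j ∈ Icc 1 N, (1 + k (t + r + j)))⁻¹ * P (t + r + N)) atTop (nhds 0) →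
      Summable (fun q : ℕ =>
          (∏ j ∈ Icc (r + 1) (r + (q + 1)), (1 + g (t + j)) / (1 + k (t + j)))
            * (∏ j ∈ Icc 1 r, (1 + g (t + j))) * d t) →
      P (t + r) = ∑' q : ℕ,
          (∏ j ∈ Icc (r + 1) (r + (q + 1)), (1 + g (t + j)) / (1 + k (t + j)))
            * (∏ j ∈ Icc 1 r, (1 + g (t + j))) * d t := by
  intro r htv hsum
  set a : ℕ → ℝ := fun q =>
      (∏ j ∈ Icc (r + 1) (r + (q + 1)), (1 + g (t + j)) / (1 + k (t + j)))
        * (∏ j ∈ Icc 1 r, (1 + g (t + j))) * d t with ha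
  -- dividend formula
  have hdm : ∀ m : ℕ, d (t + m) = d t * ∏ j ∈ Icc 1 m, (1 + g (t + j)) := by
    intro m
    induction m with
    | zero => simp
    | succ n ih =>
      have h1 : 1 ≤ t + (n + 1) := by omega
      rw [hrecd _ h1, show t + (n + 1) - 1 = t + n by omega, ih,
        Finset.prod_Icc_succ_top (by omega : 1 ≤ n + 1)]
      ring
  -- reindexing lemma
  have reindex : ∀ (f : ℕ → ℝ) (m : ℕ),
      (∏ j ∈ Icc (r + 1) (r + m), f (t + j)) = ∏ j ∈ Icc 1 m, f (t + r + j) := by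
    intro f m
    rw [← Finset.map_add_left_Icc 1 m r, Finset.prod_map]
    apply Finset.prod_congr rfl
    intro x _
    simp [addLeftEmbedding, add_assoc]
  -- positivity of k products
  have hKpos : ∀ m : ℕ, 0 < ∏ j ∈ Icc 1 m, (1 + k (t + r + j)) := by
    intro m; exact Finset.prod_pos fun i _ => hk _
  -- the term identity
  have hterm : ∀ n : ℕ,
      a n = (∏ j ∈ Icc 1 (n + 1), (1 + k (t + r + j)))⁻¹ * d (t + r + (n + 1)) := by
    intro n
    have hsplit : (∏ j ∈ Icc 1 r, (1 + g (t + j))) *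
        ∏ j ∈ Icc (r + 1) (r + (n + 1)), (1 + g (t + j))
        = ∏ j ∈ Icc 1 (r + (n + 1)), (1 + g (t + j)) := by
      rw [Finset.Icc_add_one_left_eq_Ioc, show Icc 1 r = Ioc 0 r by ext x; simp only [Finset.mem_Icc, Finset.mem_Ioc]; omega, show Icc 1 (r + (n + 1)) = Ioc 0 (r + (n + 1)) by ext x; simp only [Finset.mem_Icc, Finset.mem_Ioc]; omega]
      exact Finset.prod_Ioc_consecutive _ (by omega) (by omega)
    have hd' : d (t + r + (n + 1)) = d t * ∏ j ∈ Icc 1 (r + (n + 1)), (1 + g (t + j)) := by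
      rw [show t + r + (n + 1) = t + (r + (n + 1)) by ring]; exact hdm _
    have hkprod : (∏ j ∈ Icc (r + 1) (r + (n + 1)), (1 + k (t + j)))
        = ∏ j ∈ Icc 1 (n + 1), (1 + k (t + r + j)) := reindex (fun x => 1 + k x) (n + 1)
    have hKne : (∏ j ∈ Icc 1 (n + 1), (1 + k (t + r + j))) ≠ 0 := (hKpos _).ne'
    rw [ha]
    simp only [Finset.prod_div_distrib]
    rw [hkprod, hd', ← hsplit]
    field_simp
  -- partial sum identity
  have key : ∀ N : ℕ, (∏ j ∈ Icc 1 N, (1 + k (t + r + j)))⁻¹ * P (t + r + N)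
      = P (t + r) - ∑ q ∈ Finset.range N, a q := by
    intro N
    induction N with
    | zero => simp
    | succ n ih =>
      have hc : (0:ℝ) < 1 + k (t + r + (n + 1)) := hk _
      have hP : P (t + r + (n + 1)) = (1 + k (t + r + (n + 1))) * P (t + r + n)
          - d (t + r + (n + 1)) := by
        rw [show t + r + (n + 1) = (t + r + n) + 1 by ring] at *
        rw [hrecP _ (by omega)]
        simp
      rw [Finset.prod_Icc_succ_top (by omega : 1 ≤ n + 1), hP,
        Finset.sum_range_succ, hterm n,
        Finset.prod_Icc_succ_top (by omega : 1 ≤ n + 1)]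
      have h1 : (∏ j ∈ Icc 1 n, (1 + k (t + r + j))) ≠ 0 := (hKpos n).ne'
      have h2 : (1 + k (t + r + (n + 1))) ≠ 0 := hc.ne'
      field_simp
      field_simp at ih
      nlinarith [ih]
  -- take limits
  have htv' : Tendsto (fun N => P (t + r) - ∑ q ∈ Finset.range N, a q) atTop (nhds 0) := by
    simpa [key] using htv
  have hS : Tendsto (fun N => ∑ q ∈ Finset.range N, a q) atTop (nhds (P (t + r))) := by
    have h0 : Tendsto (fun _ : ℕ => P (t + r)) atTop (nhds (P (t + r))) := tendsto_const_nhds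
    have := h0.sub htv'
    simpa using this
  have hS' : Tendsto (fun N => ∑ q ∈ Finset.range N, a q) atTop (nhds (∑' q, a q)) :=
    hsum.hasSum.tendsto_sum_nat
  exact tendsto_nhds_unique hS hS'
end

section
/- Let A* be a diagonalizable matrix with A* = C Λ C^{-1}, Λ diagonal with entries λ_1, …, λ_{np} all of modulus < 1, and Φ_j = J(A*)^j J'. Then ∑_{j₁=1}^q ∑_{j₂=j₁}^q Φ_{j₂} Σ Φ_{j₁−1}' = JC (M ⊙ (∑_{j₁=1}^q ∑_{j₂=j₁}^q d(j₂) d(j₁−1)')) C' J' where M := C^{-1} J' Σ J (C')^{-1} and d(j) is the vector of diagonal entries of Λ^j, and the limit as q → ∞ exists, with the (α,β) entry of the limiting scalar double sum equal to λ_α / ((1 − λ_α)(1 − λ_α λ_β)). -/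
open Matrix Finset Filter

lemma geom_Icc (b : ℂ) (hb : b ≠ 1) (q : ℕ) :
    ∑ j ∈ Icc 1 q, b ^ (j - 1) = (1 - b ^ q) / (1 - b) := by
  induction q with
  | zero => simp
  | succ q ih =>
      rw [Finset.sum_Icc_succ_top (by omega), ih]
      rw [Nat.add_sub_cancel]
      have : (1 : ℂ) - b ≠ 0 := sub_ne_zero.2 hb.symm
      field_simp
      ring

lemma closed_form (a b : ℂ) (ha1 : a ≠ 1) (ha : a * b ≠ 1) (hb : b ≠ 1) (q : ℕ) :
    ∑ j₁ ∈ Icc 1 q, ∑ j₂ ∈ Icc j₁ q, a ^ j₂ * b ^ (j₁ - 1)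
      = (a * (1 - (a*b) ^ q) / (1 - a*b) - a ^ (q+1) * (1 - b ^ q) / (1 - b)) / (1 - a) := by
  have hab : (1:ℂ) - a*b ≠ 0 := sub_ne_zero.2 (Ne.symm ha)
  have hb' : (1:ℂ) - b ≠ 0 := sub_ne_zero.2 (Ne.symm hb)
  have hA : (1:ℂ) - a ≠ 0 := sub_ne_zero.2 (Ne.symm ha1)
  induction q with
  | zero => simp
  | succ q ih =>
      have hrec : ∑ j₁ ∈ Icc 1 (q+1), ∑ j₂ ∈ Icc j₁ (q+1), a ^ j₂ * b ^ (j₁ - 1)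
          = (∑ j₁ ∈ Icc 1 q, ∑ j₂ ∈ Icc j₁ q, a ^ j₂ * b ^ (j₁ - 1))
            + a ^ (q+1) * ∑ j₁ ∈ Icc 1 (q+1), b ^ (j₁ - 1) := by
        rw [Finset.sum_Icc_succ_top (by omega : 1 ≤ q + 1)]
        have h1 : ∀ j₁ ∈ Icc 1 q, ∑ j₂ ∈ Icc j₁ (q+1), a ^ j₂ * b ^ (j₁ - 1)
            = (∑ j₂ ∈ Icc j₁ q, a ^ j₂ * b ^ (j₁ - 1)) + a ^ (q+1) * b ^ (j₁ - 1) := by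
          intro j₁ hj₁
          rw [Finset.sum_Icc_succ_top (by exact (Finset.mem_Icc.1 hj₁).2.trans (by omega))]
        rw [Finset.sum_congr rfl h1, Finset.sum_add_distrib,
          Finset.sum_Icc_succ_top (by omega : 1 ≤ q + 1)]
        simp [Finset.Icc_self, Finset.mul_sum, mul_add]
        ring
      rw [hrec, ih, geom_Icc b hb]
      field_simp
      ring

lemma scalar_tendsto (a b : ℂ) (ha : ‖a‖ < 1) (hb : ‖b‖ < 1) :
    Tendsto (fun q : ℕ => ∑ j₁ ∈ Icc 1 q, ∑ j₂ ∈ Icc j₁ q, a ^ j₂ * b ^ (j₁ - 1))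
      atTop (nhds (a / ((1 - a) * (1 - a * b)))) := by
  have hna : ‖a‖ < 1 := by exact ha
  have hnb : ‖b‖ < 1 := by exact hb
  have hnab : ‖a * b‖ < 1 := by
    rw [norm_mul]
    calc ‖a‖ * ‖b‖ ≤ ‖a‖ * 1 := by nlinarith [norm_nonneg a, norm_nonneg b]
      _ < 1 := by simpa using hna
  have ha1 : a ≠ 1 := fun h => by simp [h] at hna
  have hb1 : b ≠ 1 := fun h => by simp [h] at hnb
  have hab1 : a * b ≠ 1 := fun h => by simp [h] at hnab
  have hA : (1:ℂ) - a ≠ 0 := sub_ne_zero.2 (Ne.symm ha1)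
  have hB : (1:ℂ) - b ≠ 0 := sub_ne_zero.2 (Ne.symm hb1)
  have hAB : (1:ℂ) - a*b ≠ 0 := sub_ne_zero.2 (Ne.symm hab1)
  have t1 : Tendsto (fun q : ℕ => (a*b) ^ q) atTop (nhds 0) :=
    tendsto_pow_atTop_nhds_zero_of_norm_lt_one hnab
  have t2 : Tendsto (fun q : ℕ => a ^ (q+1)) atTop (nhds 0) := by
    have := (tendsto_pow_atTop_nhds_zero_of_norm_lt_one hna).const_mul a
    simpa [pow_succ, mul_comm] using this
  have t3 : Tendsto (fun q : ℕ => b ^ q) atTop (nhds 0) :=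
    tendsto_pow_atTop_nhds_zero_of_norm_lt_one hnb
  have main : Tendsto (fun q : ℕ =>
      (a * (1 - (a*b) ^ q) / (1 - a*b) - a ^ (q+1) * (1 - b ^ q) / (1 - b)) / (1 - a))
      atTop (nhds ((a * (1 - 0) / (1 - a*b) - 0 * (1 - 0) / (1 - b)) / (1 - a))) :=
    ((((tendsto_const_nhds.sub t1).const_mul a).div_const _).sub
      ((t2.mul (tendsto_const_nhds.sub t3)).div_const _)).div_const _
  have hval : (a * (1 - (0:ℂ)) / (1 - a*b) - 0 * (1 - 0) / (1 - b)) / (1 - a)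
      = a / ((1 - a) * (1 - a*b)) := by
    norm_num [div_div, mul_comm]
  rw [hval] at main
  exact main.congr fun q => (closed_form a b ha1 hab1 hb1 q).symm

lemma sandwich {m : ℕ} (u w : Fin m → ℂ) (N : Matrix (Fin m) (Fin m) ℂ) :
    diagonal u * N * diagonal w = N ⊙ vecMulVec u w := by
  ext i j
  simp [mul_diagonal, diagonal_mul, Matrix.hadamard_apply, vecMulVec_apply]
  ring

lemma hadamard_sum {m k : ℕ} {ι : Type*} (s : Finset ι) (M : Matrix (Fin m) (Fin k) ℂ)
    (f : ι → Matrix (Fin m) (Fin k) ℂ) :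
    M ⊙ (∑ i ∈ s, f i) = ∑ i ∈ s, M ⊙ f i := by
  ext a b
  simp [Matrix.hadamard_apply, Matrix.sum_apply, Finset.mul_sum]

theorem gamma_double_sum_diagonalizable
    (n p : ℕ) (A C : Matrix (Fin (n * p)) (Fin (n * p)) ℂ)
    (lam : Fin (n * p) → ℂ) (hC : IsUnit C.det)
    (hA : A = C * diagonal lam * C⁻¹)
    (hlam : ∀ i, ‖lam i‖ < 1)
    (hdistinct : Function.Injective lam)
    (J : Matrix (Fin n) (Fin (n * p)) ℂ)
    (hJ : ∀ (i : Fin n) (j : Fin (n * p)), J i j = if (j : ℕ) = (i : ℕ) then 1 else 0)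
    (S : Matrix (Fin n) (Fin n) ℂ)
    (Φ : ℕ → Matrix (Fin n) (Fin n) ℂ) (hΦ : ∀ j, Φ j = J * A ^ j * Jᵀ)
    (M : Matrix (Fin (n * p)) (Fin (n * p)) ℂ)
    (hM : M = C⁻¹ * Jᵀ * S * J * (Cᵀ)⁻¹)
    (d : ℕ → Fin (n * p) → ℂ) (hd : ∀ j i, d j i = lam i ^ j) :
    (∀ q : ℕ,
        ∑ j₁ ∈ Icc 1 q, ∑ j₂ ∈ Icc j₁ q, Φ j₂ * S * (Φ (j₁ - 1))ᵀ
          = J * C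
              * (M ⊙ (∑ j₁ ∈ Icc 1 q, ∑ j₂ ∈ Icc j₁ q, vecMulVec (d j₂) (d (j₁ - 1))))
              * Cᵀ * Jᵀ) ∧
      (∃ Γ : Matrix (Fin n) (Fin n) ℂ,
        Tendsto (fun q : ℕ => ∑ j₁ ∈ Icc 1 q, ∑ j₂ ∈ Icc j₁ q, Φ j₂ * S * (Φ (j₁ - 1))ᵀ)
          atTop (nhds Γ)) ∧
      ∀ (α β : Fin (n * p)),
        Tendsto (fun q : ℕ => ∑ j₁ ∈ Icc 1 q, ∑ j₂ ∈ Icc j₁ q, lam α ^ j₂ * lam β ^ (j₁ - 1))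
          atTop (nhds (lam α / ((1 - lam α) * (1 - lam α * lam β)))) := by
  -- powers of A
  have hpow : ∀ j : ℕ, A ^ j = C * (diagonal lam) ^ j * C⁻¹ := by
    intro j
    induction j with
    | zero => simp [Matrix.mul_nonsing_inv C hC]
    | succ j ih =>
        rw [pow_succ, ih, hA, pow_succ]
        simp only [Matrix.mul_assoc]
        rw [Matrix.nonsing_inv_mul_cancel_left _ _ hC]
  have hdv : ∀ j : ℕ, lam ^ j = d j := by
    intro j; ext i; rw [hd]; rfl
  -- term-wise identity
  have key : ∀ j₁ j₂ : ℕ, Φ j₂ * S * (Φ j₁)ᵀ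
      = J * C * (M ⊙ vecMulVec (d j₂) (d j₁)) * Cᵀ * Jᵀ := by
    intro j₁ j₂
    rw [hΦ, hΦ, hpow, hpow, hM]
    rw [Matrix.transpose_mul, Matrix.transpose_mul, Matrix.transpose_mul, Matrix.transpose_mul,
      Matrix.transpose_transpose, Matrix.transpose_nonsing_inv, Matrix.transpose_pow,
      Matrix.diagonal_transpose]
    have hkey := sandwich (d j₂) (d j₁) (C⁻¹ * Jᵀ * S * J * (Cᵀ)⁻¹)
    rw [← hkey, Matrix.diagonal_pow, Matrix.diagonal_pow, hdv, hdv]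
    simp only [Matrix.mul_assoc]
  -- part 1
  have part1 : ∀ q : ℕ,
      ∑ j₁ ∈ Icc 1 q, ∑ j₂ ∈ Icc j₁ q, Φ j₂ * S * (Φ (j₁ - 1))ᵀ
        = J * C
            * (M ⊙ (∑ j₁ ∈ Icc 1 q, ∑ j₂ ∈ Icc j₁ q, vecMulVec (d j₂) (d (j₁ - 1))))
            * Cᵀ * Jᵀ := by
    intro q
    calc ∑ j₁ ∈ Icc 1 q, ∑ j₂ ∈ Icc j₁ q, Φ j₂ * S * (Φ (j₁ - 1))ᵀ
        = ∑ j₁ ∈ Icc 1 q, ∑ j₂ ∈ Icc j₁ q,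
            J * C * (M ⊙ vecMulVec (d j₂) (d (j₁ - 1))) * Cᵀ * Jᵀ :=
          Finset.sum_congr rfl fun j₁ _ => Finset.sum_congr rfl fun j₂ _ => key (j₁ - 1) j₂
      _ = _ := by simp only [hadamard_sum, Matrix.mul_sum, Matrix.sum_mul]
  refine ⟨part1, ?_, fun α β => scalar_tendsto (lam α) (lam β) (hlam α) (hlam β)⟩
  -- part 2 : existence of the limit
  set L : Matrix (Fin (n * p)) (Fin (n * p)) ℂ :=
    Matrix.of fun α β => lam α / ((1 - lam α) * (1 - lam α * lam β)) with hL
  have hG : Tendsto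
      (fun q : ℕ => ∑ j₁ ∈ Icc 1 q, ∑ j₂ ∈ Icc j₁ q, vecMulVec (d j₂) (d (j₁ - 1)))
      atTop (nhds L) := by
    refine tendsto_pi_nhds.mpr fun α => ?_
    rw [tendsto_pi_nhds]
    intro β
    have h1 := scalar_tendsto (lam α) (lam β) (hlam α) (hlam β)
    refine h1.congr fun q => ?_
    simp [Matrix.sum_apply, vecMulVec_apply, hd]
  have hcont : Continuous
      (fun X : Matrix (Fin (n * p)) (Fin (n * p)) ℂ => J * C * (M ⊙ X) * Cᵀ * Jᵀ) := by
    have h1 : Continuous (fun X : Matrix (Fin (n * p)) (Fin (n * p)) ℂ => M ⊙ X) :=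
      continuous_matrix fun i j => continuous_const.mul (continuous_id.matrix_elem i j)
    exact ((continuous_const.matrix_mul h1).matrix_mul continuous_const).matrix_mul
      continuous_const
  refine ⟨J * C * (M ⊙ L) * Cᵀ * Jᵀ, ?_⟩
  have := (hcont.tendsto L).comp hG
  exact this.congr fun q => (part1 q).symm
end
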